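/- Let n ≥ 3 and c ∈ int(Δ^{n-1}). Then the DeGroot–Friedkin map f has at most one fixed point in int(Δ^{n-1}): if x, y ∈ int(Δ^{n-1}) satisfy f(x) = x and f(y) = y, then x = y. -/

import Mathlib

open Finset

/-- The DeGroot–Friedkin map `f(x) = (c ⊘ (1−x)) / ∑ᵢ cᵢ/(1−xᵢ)`. -/
noncomputable def DFmap {n : ℕ} (c x : Fin n → ℝ) : Fin n → ℝ :=
  fun i => (c i / (1 - x i)) / (∑ j, c j / (1 - x j))

private lemma gmono {a b : ℝ} (ha : 0 ≤ a) (hab : a < b) (hb : b ≤ 1/2) :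
    a * (1 - a) < b * (1 - b) := by nlinarith

private lemma gmono' {a b : ℝ} (ha : 0 ≤ a) (hab : a ≤ b) (hb : b ≤ 1/2) :
    a * (1 - a) ≤ b * (1 - b) := by nlinarith

/-- The lower branch solving `t(1-t) = l * (s(1-s))`. -/
noncomputable def DFpsi (l t : ℝ) : ℝ := (1 - Real.sqrt (1 - 4 * l * (t * (1 - t)))) / 2

private lemma psi_eq {l t x : ℝ} (h : x * (1 - x) = l * (t * (1 - t))) (hx : x ≤ 1/2) :
    DFpsi l t = x := by
  unfold DFpsi
  have h2 : 1 - 4 * l * (t * (1 - t)) = (1 - 2*x)^2 := by linear_combination 4 * h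
  rw [h2, Real.sqrt_sq (by linarith)]
  ring

private lemma psi_superadd {l u v : ℝ} (hl : 1 < l) (hu : 0 < u) (hv : 0 < v)
    (hw : u + v < 1/2) (hq : 4 * l * ((u + v) * (1 - (u + v))) ≤ 1) :
    DFpsi l u + DFpsi l v < DFpsi l (u + v) := by
  have hl0 : (0:ℝ) < l := by linarith
  have hqw : 0 ≤ 1 - 4*l*((u+v)*(1-(u+v))) := by linarith
  have hgu : u*(1-u) ≤ (u+v)*(1-(u+v)) := gmono' hu.le (by linarith) (by linarith)
  have hgv : v*(1-v) ≤ (u+v)*(1-(u+v)) := gmono' hv.le (by linarith) (by linarith)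
  have hqu : 0 ≤ 1 - 4*l*(u*(1-u)) := by nlinarith
  have hqv : 0 ≤ 1 - 4*l*(v*(1-v)) := by nlinarith
  set A := Real.sqrt (1 - 4*l*(u*(1-u))) with hA
  set B := Real.sqrt (1 - 4*l*(v*(1-v))) with hB
  set C := Real.sqrt (1 - 4*l*((u+v)*(1-(u+v)))) with hC
  have hA2 : A^2 = 1 - 4*l*(u*(1-u)) := Real.sq_sqrt hqu
  have hB2 : B^2 = 1 - 4*l*(v*(1-v)) := Real.sq_sqrt hqv
  have hC2 : C^2 = 1 - 4*l*((u+v)*(1-(u+v))) := Real.sq_sqrt hqw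
  have hA0 : 0 ≤ A := Real.sqrt_nonneg _
  have hB0 : 0 ≤ B := Real.sqrt_nonneg _
  have hC0 : 0 ≤ C := Real.sqrt_nonneg _
  -- step 1 : C < 2*l*(1-(u+v)) - 1
  have hD0 : 0 < 2*l*(1-(u+v)) - 1 := by nlinarith
  have key1 : (2*l*(1-(u+v))-1)^2 - (1 - 4*l*((u+v)*(1-(u+v)))) = 4*l*(l-1)*(1-(u+v))^2 := by
    ring
  have step1 : C < 2*l*(1-(u+v)) - 1 := by
    apply lt_of_pow_lt_pow_left₀ 2 hD0.le
    nlinarith [sq_nonneg (1-(u+v))]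
  -- step 2 : C + 4*l*(u*v) < A * B
  have key2 : (A*B)^2 - (C + 4*l*(u*v))^2 = 8*l*u*v*(2*l*(1-(u+v))-1-C) := by
    have e1 : (A*B)^2 = (1-4*l*(u*(1-u)))*(1-4*l*(v*(1-v))) := by
      rw [mul_pow, hA2, hB2]
    linear_combination e1 - hC2
  have step2 : C + 4*l*(u*v) < A * B := by
    apply lt_of_pow_lt_pow_left₀ 2 (mul_nonneg hA0 hB0)
    have hprod : 0 < 8*l*u*v*(2*l*(1-(u+v))-1-C) := by
      have h8 : 0 < 8*l*u*v := by positivity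
      have := sub_pos.mpr step1
      nlinarith
    linarith [key2]
  -- step 3 : 1 + C < A + B
  have key3 : (A+B)^2 - (1+C)^2 = -(8*l*(u*v)) + 2*(A*B) - 2*C := by
    linear_combination hA2 + hB2 - hC2
  have step3 : 1 + C < A + B := by
    apply lt_of_pow_lt_pow_left₀ 2 (by linarith)
    nlinarith
  unfold DFpsi
  rw [← hA, ← hB, ← hC]
  linarith

private lemma psi_sum_le {n : ℕ} {l : ℝ} (hl : 1 < l) (y : Fin n → ℝ) (s : Finset (Fin n))
    (hs : s.Nonempty) :
    (∀ i ∈ s, 0 < y i) → (∑ i ∈ s, y i) < 1/2 →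
    4 * l * ((∑ i ∈ s, y i) * (1 - (∑ i ∈ s, y i))) ≤ 1 →
    ∑ i ∈ s, DFpsi l (y i) ≤ DFpsi l (∑ i ∈ s, y i) := by
  induction hs using Finset.Nonempty.cons_induction with
  | singleton a => intro _ _ _; simp
  | cons a t ha ht ih =>
    intro hpos hhalf hq
    rw [Finset.sum_cons] at hhalf hq ⊢
    rw [Finset.sum_cons]
    have hya : 0 < y a := hpos a (Finset.mem_cons_self _ _)
    have htpos : ∀ i ∈ t, 0 < y i := fun i hi => hpos i (Finset.mem_cons_of_mem hi)
    have hts : 0 < ∑ i ∈ t, y i := Finset.sum_pos htpos ht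
    have hsum : ∑ i ∈ t, y i < 1/2 := by linarith
    have hg : (∑ i ∈ t, y i)*(1-(∑ i ∈ t, y i)) ≤ (y a + ∑ i ∈ t, y i)*(1-(y a + ∑ i ∈ t, y i)) :=
      gmono' hts.le (by linarith) (by linarith)
    have hq' : 4 * l * ((∑ i ∈ t, y i) * (1 - (∑ i ∈ t, y i))) ≤ 1 := by nlinarith
    have h1 := ih htpos hsum hq'
    have h2 := psi_superadd hl hya hts hhalf hq
    linarith

private lemma psi_sum_lt {n : ℕ} {l : ℝ} (hl : 1 < l) (y : Fin n → ℝ) (s : Finset (Fin n))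
    (hcard : 2 ≤ s.card) (hpos : ∀ i ∈ s, 0 < y i) (hhalf : (∑ i ∈ s, y i) < 1/2)
    (hq : 4 * l * ((∑ i ∈ s, y i) * (1 - (∑ i ∈ s, y i))) ≤ 1) :
    ∑ i ∈ s, DFpsi l (y i) < DFpsi l (∑ i ∈ s, y i) := by
  obtain ⟨a, has⟩ : s.Nonempty := Finset.card_pos.mp (by omega)
  set t := s.erase a with hts
  have hins : insert a t = s := Finset.insert_erase has
  have hat : a ∉ t := Finset.notMem_erase _ _
  have htne : t.Nonempty := Finset.card_pos.mp (by rw [hts, Finset.card_erase_of_mem has]; omega)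
  have hsy : ∑ i ∈ s, y i = y a + ∑ i ∈ t, y i := by rw [← hins, Finset.sum_insert hat]
  have hsp : ∑ i ∈ s, DFpsi l (y i) = DFpsi l (y a) + ∑ i ∈ t, DFpsi l (y i) := by
    rw [← hins, Finset.sum_insert hat]
  rw [hsy] at hhalf hq
  rw [hsy, hsp]
  have hya : 0 < y a := hpos a has
  have htpos : ∀ i ∈ t, 0 < y i := fun i hi => hpos i (Finset.mem_of_mem_erase hi)
  have hsumt : 0 < ∑ i ∈ t, y i := Finset.sum_pos htpos htne
  have hsum : ∑ i ∈ t, y i < 1/2 := by linarith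
  have hg : (∑ i ∈ t, y i)*(1-(∑ i ∈ t, y i)) ≤ (y a + ∑ i ∈ t, y i)*(1-(y a + ∑ i ∈ t, y i)) :=
    gmono' hsumt.le (by linarith) (by linarith)
  have hq' : 4 * l * ((∑ i ∈ t, y i) * (1 - (∑ i ∈ t, y i))) ≤ 1 := by nlinarith
  have h1 := psi_sum_le hl y t htne htpos hsum hq'
  have h2 := psi_superadd hl hya hsumt hhalf hq
  linarith

private lemma pair_lt {n : ℕ} (hn : 3 ≤ n) {z : Fin n → ℝ} (hz : ∀ i, 0 < z i)
    (hsum : ∑ i, z i = 1) {i j : Fin n} (hij : i ≠ j) : z i + z j < 1 := by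
  obtain ⟨k, hk⟩ : ∃ k : Fin n, k ∉ ({i, j} : Finset (Fin n)) := by
    by_contra h
    push_neg at h
    have hsub : (univ : Finset (Fin n)) ⊆ {i, j} := fun k _ => h k
    have h1 := Finset.card_le_card hsub
    have h2 : ({i,j} : Finset (Fin n)).card ≤ 2 :=
      (Finset.card_insert_le _ _).trans (by simp)
    rw [Finset.card_univ, Fintype.card_fin] at h1
    omega
  simp only [Finset.mem_insert, Finset.mem_singleton, not_or] at hk
  have hsum3 : z i + z j + z k ≤ 1 := by
    rw [← hsum]
    have : ∑ m ∈ ({i, j, k} : Finset (Fin n)), z m = z i + z j + z k := by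
      rw [Finset.sum_insert (by simp [hij, Ne.symm hk.1]),
        Finset.sum_insert (by simp [Ne.symm hk.2]), Finset.sum_singleton]
      ring
    rw [← this]
    exact Finset.sum_le_univ_sum_of_nonneg (fun m => (hz m).le)
  linarith [hz k]

private lemma lt_one {n : ℕ} (hn : 3 ≤ n) {z : Fin n → ℝ} (hz : ∀ i, 0 < z i)
    (hsum : ∑ i, z i = 1) (i : Fin n) : z i < 1 := by
  obtain ⟨j, hj⟩ : ∃ j : Fin n, j ≠ i := by
    rcases eq_or_ne (⟨0, by omega⟩ : Fin n) i with h | h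
    · refine ⟨⟨1, by omega⟩, ?_⟩
      rw [← h]
      simp [Fin.ext_iff]
    · exact ⟨_, h⟩
  have := pair_lt hn hz hsum (Ne.symm hj)
  linarith [hz j]

private lemma core {n : ℕ} (hn : 3 ≤ n) (c x y : Fin n → ℝ)
    (hc : ∀ i, 0 < c i)
    (hx : ∀ i, 0 < x i) (hxsum : ∑ i, x i = 1)
    (hy : ∀ i, 0 < y i) (hysum : ∑ i, y i = 1)
    {sx sy : ℝ} (hsy : 0 < sy) (hle : sy ≤ sx)
    (hgx : ∀ i, x i * (1 - x i) = sx * c i)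
    (hgy : ∀ i, y i * (1 - y i) = sy * c i) : x = y := by
  haveI : Nonempty (Fin n) := ⟨⟨0, by omega⟩⟩
  rcases eq_or_lt_of_le hle with heq | hlt
  · -- equal scaling : pointwise g(x i) = g(y i)
    have hgxy : ∀ i, x i * (1 - x i) = y i * (1 - y i) := by
      intro i; rw [hgx i, hgy i, heq]
    by_contra hne
    obtain ⟨i, hi⟩ := Function.ne_iff.mp hne
    have hxyi : x i + y i = 1 := by
      have h0 : (x i - y i) * (1 - x i - y i) = 0 := by linear_combination hgxy i
      rcases mul_eq_zero.mp h0 with h | h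
      · exact absurd (by linarith) hi
      · linarith
    have hj : ∃ j, j ≠ i ∧ x j ≠ y j := by
      by_contra h
      push_neg at h
      have hxe : ∑ j ∈ univ.erase i, x j = ∑ j ∈ univ.erase i, y j :=
        Finset.sum_congr rfl fun j hj => h j (Finset.mem_erase.mp hj).1
      rw [Finset.sum_erase_eq_sub (Finset.mem_univ i),
        Finset.sum_erase_eq_sub (Finset.mem_univ i), hxsum, hysum] at hxe
      exact hi (by linarith)
    obtain ⟨j, hji, hj⟩ := hj
    have hxyj : x j + y j = 1 := by
      have h0 : (x j - y j) * (1 - x j - y j) = 0 := by linear_combination hgxy j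
      rcases mul_eq_zero.mp h0 with h | h
      · exact absurd (by linarith) hj
      · linarith
    obtain ⟨k, hk⟩ : ∃ k : Fin n, k ∉ ({j, i} : Finset (Fin n)) := by
      by_contra h
      push_neg at h
      have hsub : (univ : Finset (Fin n)) ⊆ {j, i} := fun k _ => h k
      have h1 := Finset.card_le_card hsub
      have h2 : ({j,i} : Finset (Fin n)).card ≤ 2 :=
        (Finset.card_insert_le _ _).trans (by simp)
      rw [Finset.card_univ, Fintype.card_fin] at h1
      omega
    simp only [Finset.mem_insert, Finset.mem_singleton, not_or] at hk
    have hsum2 : ∑ m, (x m + y m) = 2 := by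
      rw [Finset.sum_add_distrib, hxsum, hysum]; norm_num
    have hsum3 : (x j + y j) + (x i + y i) + (x k + y k) ≤ 2 := by
      rw [← hsum2]
      have : ∑ m ∈ ({j, i, k} : Finset (Fin n)), (x m + y m)
          = (x j + y j) + (x i + y i) + (x k + y k) := by
        rw [Finset.sum_insert (by simp [hji, Ne.symm hk.1]),
          Finset.sum_insert (by simp [Ne.symm hk.2]), Finset.sum_singleton]
        ring
      rw [← this]
      exact Finset.sum_le_univ_sum_of_nonneg (fun m => by linarith [hx m, hy m])
    linarith [hx k, hy k]
  · -- strict case : derive False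
    exfalso
    set l := sx / sy with hldef
    have hl : 1 < l := (one_lt_div hsy).mpr hlt
    have hg : ∀ i, x i * (1 - x i) = l * (y i * (1 - y i)) := by
      intro i
      rw [hgx i, hgy i, hldef]
      field_simp
    have hx1 : ∀ i, x i < 1 := lt_one hn hx hxsum
    have hy1 : ∀ i, y i < 1 := lt_one hn hy hysum
    by_cases hB : ∀ i, y i ≤ 1/2
    · -- no big coordinate in y
      have hlt' : ∀ i, y i < x i := by
        intro i
        have hxi1 := hx1 i
        have hu0 : 0 < min (x i) (1 - x i) := lt_min (hx i) (by linarith)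
        have hu2 : min (x i) (1 - x i) ≤ 1/2 := by
          rcases le_total (x i) (1 - x i) with h | h
          · rw [min_eq_left h]; linarith
          · rw [min_eq_right h]; linarith
        have hgu : min (x i) (1 - x i) * (1 - min (x i) (1 - x i)) = x i * (1 - x i) := by
          rcases le_total (x i) (1 - x i) with h | h
          · rw [min_eq_left h]
          · rw [min_eq_right h]; ring
        have hyg : 0 < y i * (1 - y i) := mul_pos (hy i) (by linarith [hy1 i])
        have h1 : y i < min (x i) (1 - x i) := by
          by_contra h
          push_neg at h
          have := gmono' (by linarith [hu0] : (0:ℝ) ≤ min (x i) (1 - x i)) h (hB i)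
          nlinarith [hg i]
        exact h1.trans_le (min_le_left _ _)
      have := Finset.sum_lt_sum_of_nonempty (Finset.univ_nonempty) (fun i _ => hlt' i)
      rw [hysum, hxsum] at this
      exact lt_irrefl _ this
    · push_neg at hB
      obtain ⟨k, hk⟩ := hB
      have hyk1 : y k < 1 := hy1 k
      have hysmall : ∀ i, i ≠ k → y i < 1 - y k := by
        intro i hik
        have := pair_lt hn hy hysum hik
        linarith
      have hxsmall : ∀ i, i ≠ k → x i < 1/2 := by
        intro m hmk
        by_contra hge
        push_neg at hge
        -- c k < c m
        have h1 : x k + x m < 1 := pair_lt hn hx hxsum (Ne.symm hmk)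
        have h2 : x k * (1 - x k) < (1 - x m) * (1 - (1 - x m)) :=
          gmono (hx k).le (by linarith) (by linarith)
        have hckm : c k < c m := by
          have := hgx k; have := hgx m
          have hsx : 0 < sx := lt_of_lt_of_le hsy hle
          nlinarith
        -- c m < c k
        have h3 : y m + y k < 1 := pair_lt hn hy hysum hmk
        have h4 : y m * (1 - y m) < (1 - y k) * (1 - (1 - y k)) :=
          gmono (hy m).le (by linarith) (by linarith)
        have hcmk : c m < c k := by
          have := hgy k; have := hgy m
          nlinarith
        linarith
      set s := univ.erase k with hsdef
      have hmemk : k ∈ (univ : Finset (Fin n)) := Finset.mem_univ k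
      have hsumy : ∑ i ∈ s, y i = 1 - y k := by
        rw [hsdef, Finset.sum_erase_eq_sub hmemk, hysum]
      have hsumx : ∑ i ∈ s, x i = 1 - x k := by
        rw [hsdef, Finset.sum_erase_eq_sub hmemk, hxsum]
      have hcard : 2 ≤ s.card := by
        rw [hsdef, Finset.card_erase_of_mem hmemk, Finset.card_univ, Fintype.card_fin]
        omega
      have h14 : x k * (1 - x k) ≤ 1/4 := by nlinarith [sq_nonneg (1 - 2 * x k)]
      have hgk : l * ((1 - y k) * (1 - (1 - y k))) = x k * (1 - x k) := by
        linear_combination - hg k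
      have hq : 4 * l * ((∑ i ∈ s, y i) * (1 - (∑ i ∈ s, y i))) ≤ 1 := by
        rw [hsumy]; linarith
      have hhalf : (∑ i ∈ s, y i) < 1/2 := by rw [hsumy]; linarith
      have hlt2 := psi_sum_lt hl y s hcard (fun i _ => hy i) hhalf hq
      have hpsix : ∀ i ∈ s, DFpsi l (y i) = x i := by
        intro i hi
        have hik : i ≠ k := (Finset.mem_erase.mp hi).1
        exact psi_eq (hg i) (hxsmall i hik).le
      rw [Finset.sum_congr rfl hpsix, hsumx, hsumy] at hlt2
      -- DFpsi l (1 - y k) = min (x k) (1 - x k)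
      have htk2 : min (x k) (1 - x k) ≤ 1/2 := by
        rcases le_total (x k) (1 - x k) with h | h
        · rw [min_eq_left h]; linarith
        · rw [min_eq_right h]; linarith
      have htkg : min (x k) (1 - x k) * (1 - min (x k) (1 - x k))
          = l * ((1 - y k) * (1 - (1 - y k))) := by
        rcases le_total (x k) (1 - x k) with h | h
        · rw [min_eq_left h, hgk]
        · rw [min_eq_right h, hgk]; ring
      have hpsik : DFpsi l (1 - y k) = min (x k) (1 - x k) := psi_eq htkg htk2
      rw [hpsik] at hlt2
      have := min_le_right (x k) (1 - x k)
      linarith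

/-- For `n ≥ 3` and `c ∈ int(Δ^{n-1})`, the DeGroot–Friedkin map has at most
one fixed point in `int(Δ^{n-1})`. -/
theorem DFmap_fixedPoint_unique (n : ℕ) (hn : 3 ≤ n) (c : Fin n → ℝ)
    (hc : ∀ i, 0 < c i) (hcsum : ∑ i, c i = 1)
    (x : Fin n → ℝ) (hx : ∀ i, 0 < x i) (hxsum : ∑ i, x i = 1)
    (y : Fin n → ℝ) (hy : ∀ i, 0 < y i) (hysum : ∑ i, y i = 1)
    (hfx : DFmap c x = x) (hfy : DFmap c y = y) :
    x = y := by
  have extract : ∀ z : Fin n → ℝ, (∀ i, 0 < z i) → (∑ i, z i = 1) → DFmap c z = z →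
      ∃ s : ℝ, 0 < s ∧ ∀ i, z i * (1 - z i) = s * c i := by
    intro z hz hzsum hfz
    haveI : Nonempty (Fin n) := ⟨⟨0, by omega⟩⟩
    have hz1 : ∀ i, z i < 1 := lt_one hn hz hzsum
    have hQ : 0 < ∑ j, c j / (1 - z j) :=
      Finset.sum_pos (fun j _ => div_pos (hc j) (by linarith [hz1 j])) Finset.univ_nonempty
    have hci : ∀ i, c i = z i * (1 - z i) * (∑ j, c j / (1 - z j)) := by
      intro i
      have := congrFun hfz i
      unfold DFmap at this
      field_simp at this
      have hD : (0:ℝ) < (1 - z i) * ∑ j, c j / (1 - z j) :=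
        mul_pos (by linarith [hz1 i]) hQ
      rw [div_eq_iff (sub_pos.mpr (hz1 i)).ne'] at this
      linear_combination this
    refine ⟨∑ j, z j * (1 - z j), ?_, ?_⟩
    · have hQs : (∑ j, z j * (1 - z j)) * (∑ j, c j / (1 - z j)) = 1 := by
        calc (∑ j, z j * (1 - z j)) * (∑ j, c j / (1 - z j))
            = ∑ j, z j * (1 - z j) * (∑ k, c k / (1 - z k)) := Finset.sum_mul _ _ _
          _ = ∑ j, c j := Finset.sum_congr rfl fun j _ => (hci j).symm
          _ = 1 := hcsum
      nlinarith [hQ]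
    · intro i
      have hQs : (∑ j, z j * (1 - z j)) * (∑ j, c j / (1 - z j)) = 1 := by
        calc (∑ j, z j * (1 - z j)) * (∑ j, c j / (1 - z j))
            = ∑ j, z j * (1 - z j) * (∑ k, c k / (1 - z k)) := Finset.sum_mul _ _ _
          _ = ∑ j, c j := Finset.sum_congr rfl fun j _ => (hci j).symm
          _ = 1 := hcsum
      linear_combination (-(∑ j, z j * (1 - z j))) * hci i - (z i * (1 - z i)) * hQs
  obtain ⟨sx, hsx, hgx⟩ := extract x hx hxsum hfx
  obtain ⟨sy, hsy, hgy⟩ := extract y hy hysum hfy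
  rcases le_total sy sx with h | h
  · exact core hn c x y hc hx hxsum hy hysum hsy h hgx hgy
  · exact (core hn c y x hc hy hysum hx hxsum hsx h hgy hgx).symm
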